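/- arXiv:0705.0705 — 3 statements merged into one kernel-verified Lean document; each statement's English description precedes it below -/
import Mathlib

section
/- For the sliced propagator C_i(x,y) = ∫_{M^{-2i}}^{M^{-2(i-1)}} e^{-m²α − |x−y|²/(4α)} α^{-d/2} dα with M > 1, d > 2, and i ≥ 1, there is a constant K (depending on M, d) such that |C_i(x,y)| ≤ K·M^{(d−2)i}·e^{−M^i|x−y|}. -/
open MeasureTheory Real

/-- Sliced propagator bound: for `M > 1`, `d > 2`, there is a constant `K` (depending
only on `M` and `d`) such that for every mass `m ≥ 0`, slice index `i ≥ 1` and points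
`x, y ∈ ℝ^d`, the sliced propagator
`C_i(x,y) = ∫_{M^{-2i}}^{M^{-2(i-1)}} e^{-m²α - |x-y|²/(4α)} α^{-d/2} dα`
satisfies `|C_i(x,y)| ≤ K · M^{(d-2)i} · e^{-M^i |x-y|}`. -/
theorem sliced_propagator_bound (d : ℕ) (hd : 2 < d) (M : ℝ) (hM : 1 < M) :
    ∃ K > (0 : ℝ), ∀ m : ℝ, 0 ≤ m → ∀ i : ℕ, 1 ≤ i →
      ∀ x y : EuclideanSpace ℝ (Fin d),
        |∫ α in Set.Ioc (M ^ (-2 * (i : ℝ))) (M ^ (-2 * ((i : ℝ) - 1))),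
            Real.exp (-(m ^ 2 * α) - ‖x - y‖ ^ 2 / (4 * α)) * α ^ (-(d : ℝ) / 2)|
          ≤ K * M ^ (((d : ℝ) - 2) * (i : ℝ)) * Real.exp (-(M ^ (i : ℝ)) * ‖x - y‖) := by
  have hM0 : (0 : ℝ) < M := by linarith
  refine ⟨M ^ (2 : ℝ) * Real.exp (M ^ 2), by positivity, ?_⟩
  intro m hm i hi x y
  set r := ‖x - y‖ with hr
  have hr0 : 0 ≤ r := norm_nonneg _
  set a := M ^ (-2 * (i : ℝ)) with ha
  set b := M ^ (-2 * ((i : ℝ) - 1)) with hb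
  have ha0 : 0 < a := Real.rpow_pos_of_pos hM0 _
  have hb0 : 0 < b := Real.rpow_pos_of_pos hM0 _
  have hab : a ≤ b := Real.rpow_le_rpow_of_exponent_le hM.le (by linarith)
  set u := M ^ ((i : ℝ) - 1) with hu
  have hu0 : 0 < u := Real.rpow_pos_of_pos hM0 _
  have huM : u * M = M ^ (i : ℝ) := by
    have h := (Real.rpow_add hM0 ((i : ℝ) - 1) 1).symm
    rw [Real.rpow_one] at h
    rw [hu, h]
    norm_num
  have hbu : b * (u * u) = 1 := by
    rw [hb, hu, ← Real.rpow_add hM0, ← Real.rpow_add hM0, ← Real.rpow_zero M]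
    ring_nf
  -- AM-GM: M^i * r ≤ u^2 r^2/4 + M^2
  have hamgm : M ^ (i : ℝ) * r ≤ u * u * r ^ 2 / 4 + M ^ 2 := by
    rw [← huM]
    nlinarith [sq_nonneg (u * r - 2 * M), hu0, hr0]
  set C := M ^ ((d : ℝ) * i) * (Real.exp (M ^ 2) * Real.exp (-(M ^ (i : ℝ)) * r)) with hC
  have hbound : ∀ α ∈ Set.Ioc a b,
      ‖Real.exp (-(m ^ 2 * α) - r ^ 2 / (4 * α)) * α ^ (-(d : ℝ) / 2)‖ ≤ C := by
    intro α hα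
    obtain ⟨hαa, hαb⟩ := hα
    have hα0 : 0 < α := lt_trans ha0 hαa
    rw [Real.norm_eq_abs, abs_of_pos (by positivity)]
    have h1 : α ^ (-(d : ℝ) / 2) ≤ M ^ ((d : ℝ) * i) := by
      have h1a : α ^ (-(d : ℝ) / 2) ≤ a ^ (-(d : ℝ) / 2) := by
        refine Real.rpow_le_rpow_of_nonpos ha0 hαa.le ?_
        have : (0 : ℝ) ≤ (d : ℝ) := Nat.cast_nonneg d
        linarith
      have h1b : a ^ (-(d : ℝ) / 2) = M ^ ((d : ℝ) * i) := by
        rw [ha, ← Real.rpow_mul hM0.le]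
        congr 1
        ring
      rw [← h1b]; exact h1a
    have h2 : Real.exp (-(m ^ 2 * α) - r ^ 2 / (4 * α))
        ≤ Real.exp (M ^ 2) * Real.exp (-(M ^ (i : ℝ)) * r) := by
      rw [← Real.exp_add]
      apply Real.exp_le_exp.mpr
      have hb' : r ^ 2 / (4 * b) ≤ r ^ 2 / (4 * α) := by
        apply div_le_div_of_nonneg_left (by positivity) (by positivity)
        linarith
      have hbeq : r ^ 2 / (4 * b) = u * u * r ^ 2 / 4 := by
        field_simp
        nlinarith [hbu]
      have hmα : 0 ≤ m ^ 2 * α := by positivity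
      linarith
    calc Real.exp (-(m ^ 2 * α) - r ^ 2 / (4 * α)) * α ^ (-(d : ℝ) / 2)
        ≤ (Real.exp (M ^ 2) * Real.exp (-(M ^ (i : ℝ)) * r)) * (M ^ ((d : ℝ) * i)) := by
          apply mul_le_mul h2 h1 (by positivity) (by positivity)
      _ = C := by rw [hC]; ring
  have hmeas : volume (Set.Ioc a b) < ⊤ := by
    rw [Real.volume_Ioc]; exact ENNReal.ofReal_lt_top
  have key := norm_setIntegral_le_of_norm_le_const hmeas hbound
  rw [measureReal_def] at key
  rw [Real.norm_eq_abs] at key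
  have hvol : (volume (Set.Ioc a b)).toReal = b - a := by
    rw [Real.volume_Ioc, ENNReal.toReal_ofReal (by linarith)]
  rw [hvol] at key
  refine key.trans ?_
  have hCpos : 0 ≤ C := by rw [hC]; positivity
  have hba : b - a ≤ b := by linarith
  calc C * (b - a) ≤ C * b := by nlinarith
    _ = M ^ (2 : ℝ) * Real.exp (M ^ 2) * M ^ (((d : ℝ) - 2) * (i : ℝ))
          * Real.exp (-(M ^ (i : ℝ)) * r) := by
        have hpow : M ^ ((d : ℝ) * i) * M ^ (-2 * ((i : ℝ) - 1))
            = M ^ (2 : ℝ) * M ^ (((d : ℝ) - 2) * (i : ℝ)) := by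
          rw [← Real.rpow_add hM0, ← Real.rpow_add hM0]
          congr 1
          ring
        rw [hC, hb]
        linear_combination (Real.exp (M ^ 2) * Real.exp (-(M ^ (i : ℝ)) * r)) * hpow
end

section
/- For any n×n matrix A over a commutative ring, the Berezin (Grassmann) integral identity det A = ∫ dψ̄ dψ e^{−ψ̄Aψ} holds, where ψ̄₁,…,ψ̄ₙ, ψ₁,…,ψₙ are 2n anticommuting generators, e^{−ψ̄Aψ} = ∏-expansion of exp(−∑_{i,j} ψ̄_i A_{ij} ψ_j), and the Grassmann integral extracts the coefficient of ψ̄₁ψ₁⋯ψ̄ₙψₙ (with the appropriate sign convention). -/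
open Finset

/-- The Grassmann (exterior) algebra on `2n` anticommuting generators
`ψ₁, ψ̄₁, …, ψₙ, ψ̄ₙ`, modeled by coefficient functions indexed by subsets of the
generators.  Generator `2i` is `ψᵢ` and generator `2i+1` is `ψ̄ᵢ`, so that the top
monomial (in increasing generator order) is `ψ₁ψ̄₁ψ₂ψ̄₂⋯ψₙψ̄ₙ`, matching the Berezin
convention `∫ dψ̄ dψ ψᵢψ̄ᵢ = 1`, i.e. the sign convention for which
`∫ dψ̄ dψ e^{−ψ̄Aψ} = det A`. -/
abbrev Grassmann (n : ℕ) (R : Type*) := Finset (Fin (2 * n)) → R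

/-- Koszul sign produced when multiplying the monomials indexed by `T` and `U`. -/
def gsign {n : ℕ} (T U : Finset (Fin (2 * n))) : ℤ :=
  (-1) ^ ((T ×ˢ U).filter fun q => q.2 < q.1).card

/-- Product in the Grassmann algebra. -/
def gmul {n : ℕ} {R : Type*} [CommRing R] (f g : Grassmann n R) : Grassmann n R :=
  fun S => ∑ T ∈ S.powerset, ((gsign T (S \ T) : ℤ) : R) * f T * g (S \ T)

/-- Unit of the Grassmann algebra. -/
def gone {n : ℕ} {R : Type*} [CommRing R] : Grassmann n R :=
  fun S => if S = ∅ then 1 else 0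

/-- Powers in the Grassmann algebra. -/
def gpow {n : ℕ} {R : Type*} [CommRing R] (f : Grassmann n R) : ℕ → Grassmann n R
  | 0 => gone
  | k + 1 => gmul f (gpow f k)

/-- Exponential in the Grassmann algebra (a finite sum, since every element with no
constant term is nilpotent: monomials of degree `> 2n` vanish). -/
noncomputable def gexp {n : ℕ} {R : Type*} [CommRing R] [Algebra ℚ R]
    (f : Grassmann n R) : Grassmann n R :=
  fun S => ∑ k ∈ Finset.range (2 * n + 1),
    algebraMap ℚ R ((Nat.factorial k : ℚ))⁻¹ * gpow f k S

/-- The generator `ψᵢ`. -/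
def psi {n : ℕ} {R : Type*} [CommRing R] (i : Fin n) : Grassmann n R :=
  fun S => if S = {(⟨2 * i.1, by have := i.2; omega⟩ : Fin (2 * n))} then 1 else 0

/-- The generator `ψ̄ᵢ`. -/
def psibar {n : ℕ} {R : Type*} [CommRing R] (i : Fin n) : Grassmann n R :=
  fun S => if S = {(⟨2 * i.1 + 1, by have := i.2; omega⟩ : Fin (2 * n))} then 1 else 0

/-- The quadratic element `ψ̄Aψ = ∑_{i,j} A_{ij} ψ̄ᵢψⱼ`. -/
def quadForm {n : ℕ} {R : Type*} [CommRing R] (A : Matrix (Fin n) (Fin n) R) :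
    Grassmann n R :=
  fun S => ∑ i, ∑ j, A i j * gmul (psibar i) (psi j) S

/-- Berezin integration `∫ dψ̄ dψ`: extraction of the coefficient of the top monomial. -/
def berezin {n : ℕ} {R : Type*} [CommRing R] (f : Grassmann n R) : R :=
  f Finset.univ

namespace BZ

variable {n : ℕ} {R : Type*} [CommRing R]

lemma gsign_sq (T U : Finset (Fin (2 * n))) : gsign T U * gsign T U = 1 := by
  rw [gsign, ← mul_pow]; norm_num

lemma gsign_empty_left (U : Finset (Fin (2 * n))) : gsign ∅ U = 1 := by
  simp [gsign]

lemma gsign_empty_right (T : Finset (Fin (2 * n))) : gsign T ∅ = 1 := by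
  simp [gsign]

lemma gsign_union_right {U V : Finset (Fin (2 * n))} (T : Finset (Fin (2 * n)))
    (h : Disjoint U V) : gsign T (U ∪ V) = gsign T U * gsign T V := by
  rw [gsign, gsign, gsign, ← pow_add]
  congr 1
  rw [product_union, filter_union, card_union_of_disjoint]
  exact disjoint_filter_filter <| disjoint_product.2 <| Or.inr h

lemma gsign_union_left {T U : Finset (Fin (2 * n))} (h : Disjoint T U)
    (V : Finset (Fin (2 * n))) : gsign (T ∪ U) V = gsign T V * gsign U V := by
  rw [gsign, gsign, gsign, ← pow_add]
  congr 1
  rw [union_product, filter_union, card_union_of_disjoint]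
  exact disjoint_filter_filter <| disjoint_product.2 <| Or.inl h

lemma gsign_mul_swap {T U : Finset (Fin (2 * n))} (h : Disjoint T U) :
    gsign T U * gsign U T = (-1) ^ (T.card * U.card) := by
  rw [gsign, gsign, ← pow_add]
  congr 1
  have hswap : ((U ×ˢ T).filter fun q => q.2 < q.1).card
      = ((T ×ˢ U).filter fun q => q.1 < q.2).card := by
    apply Finset.card_bij' (fun q _ => Prod.swap q) (fun q _ => Prod.swap q)
    · rintro ⟨a, b⟩ hq
      simp only [mem_filter, mem_product] at hq ⊢
      exact ⟨⟨hq.1.2, hq.1.1⟩, hq.2⟩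
    · rintro ⟨a, b⟩ hq
      simp only [mem_filter, mem_product] at hq ⊢
      exact ⟨⟨hq.1.2, hq.1.1⟩, hq.2⟩
    · rintro ⟨a, b⟩ _; rfl
    · rintro ⟨a, b⟩ _; rfl
  rw [hswap]
  have hne : ∀ q ∈ T ×ˢ U, ¬ (q.2 < q.1) ↔ (q.1 < q.2) := by
    rintro ⟨a, b⟩ hq
    simp only [mem_product] at hq
    have hab : a ≠ b := fun hab => Finset.disjoint_left.1 h hq.1 (by rw [hab]; exact hq.2)
    constructor
    · intro h1; exact lt_of_le_of_ne (not_lt.1 h1) hab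
    · intro h1; exact not_lt.2 h1.le
  calc ((T ×ˢ U).filter fun q => q.2 < q.1).card
        + ((T ×ˢ U).filter fun q => q.1 < q.2).card
      = ((T ×ˢ U).filter fun q => q.2 < q.1).card
        + ((T ×ˢ U).filter fun q => ¬ (q.2 < q.1)).card := by
        rw [filter_congr hne]
    _ = (T ×ˢ U).card := card_filter_add_card_filter_not _
    _ = T.card * U.card := by rw [card_product]

lemma gsign_swap {T U : Finset (Fin (2 * n))} (h : Disjoint T U)
    (hT : T.card = 2) (hU : U.card = 2) : gsign U T = gsign T U := by
  have h1 := gsign_mul_swap h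
  rw [hT, hU] at h1
  norm_num at h1
  calc gsign U T = (gsign T U * gsign T U) * gsign U T := by rw [gsign_sq, one_mul]
    _ = gsign T U * (gsign T U * gsign U T) := by ring
    _ = gsign T U := by rw [h1, mul_one]

lemma gsign_single_single (a b : Fin (2 * n)) :
    gsign ({a} : Finset (Fin (2 * n))) {b} = if b < a then -1 else 1 := by
  rw [gsign, singleton_product_singleton, filter_singleton]
  split <;> simp

lemma gsign_single_swap {a b : Fin (2 * n)} (h : a ≠ b) :
    gsign ({b} : Finset (Fin (2 * n))) {a} = - gsign {a} {b} := by
  rw [gsign_single_single, gsign_single_single]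
  rcases lt_or_gt_of_ne h with h1 | h1
  · rw [if_pos h1, if_neg (asymm h1)]
  · rw [if_neg (asymm h1), if_pos h1]; norm_num

/-- The exchange lemma for double sums over powersets. -/
lemma sum_powerset_sdiff {α M : Type*} [DecidableEq α] [AddCommMonoid M] (S : Finset α)
    (F : Finset α → Finset α → M) :
    ∑ T ∈ S.powerset, ∑ T' ∈ T.powerset, F T' (T \ T')
      = ∑ T ∈ S.powerset, ∑ U ∈ (S \ T).powerset, F T U := by
  rw [Finset.sum_sigma', Finset.sum_sigma']
  apply Finset.sum_nbij' (i := fun p => (⟨p.2, p.1 \ p.2⟩ : Σ _ : Finset α, Finset α))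
    (j := fun p => (⟨p.1 ∪ p.2, p.1⟩ : Σ _ : Finset α, Finset α))
  · rintro ⟨T, T'⟩ hp
    simp only [mem_sigma, mem_powerset] at hp ⊢
    exact ⟨hp.2.trans hp.1, sdiff_subset_sdiff hp.1 le_rfl⟩
  · rintro ⟨T, U⟩ hp
    simp only [mem_sigma, mem_powerset] at hp ⊢
    exact ⟨union_subset hp.1 (hp.2.trans (sdiff_subset)), subset_union_left⟩
  · rintro ⟨T, T'⟩ hp
    simp only [mem_sigma, mem_powerset] at hp
    exact Sigma.ext (union_sdiff_of_subset hp.2) (heq_of_eq rfl)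
  · rintro ⟨T, U⟩ hp
    simp only [mem_sigma, mem_powerset] at hp
    have hd : Disjoint T U := disjoint_of_subset_right hp.2 sdiff_disjoint.symm
    exact Sigma.ext rfl (heq_of_eq (union_sdiff_cancel_left hd))
  · rintro ⟨T, T'⟩ _; rfl

end BZ
section Part2
namespace BZ

variable {n : ℕ} {R : Type*} [CommRing R]

def G (n : ℕ) (R : Type*) := Grassmann n R

instance : AddCommGroup (G n R) := inferInstanceAs (AddCommGroup (Finset (Fin (2*n)) → R))
instance : Module R (G n R) := inferInstanceAs (Module R (Finset (Fin (2*n)) → R))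

lemma gmul_assoc (f g h : Grassmann n R) : gmul (gmul f g) h = gmul f (gmul g h) := by
  funext S
  classical
  set F : Finset (Fin (2*n)) → Finset (Fin (2*n)) → R := fun a b =>
    ((gsign a b : ℤ) : R) * ((gsign a (S \ (a ∪ b)) : ℤ) : R) * ((gsign b (S \ (a ∪ b)) : ℤ) : R)
      * f a * g b * h (S \ (a ∪ b)) with hF
  have LHS : gmul (gmul f g) h S = ∑ T ∈ S.powerset, ∑ T' ∈ T.powerset, F T' (T \ T') := by
    rw [gmul]
    refine Finset.sum_congr rfl fun T hT => ?_
    rw [gmul, Finset.mul_sum, Finset.sum_mul]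
    refine Finset.sum_congr rfl fun T' hT' => ?_
    rw [Finset.mem_powerset] at hT hT'
    have hTT : T' ∪ (T \ T') = T := union_sdiff_of_subset hT'
    have hd : Disjoint T' (T \ T') := sdiff_disjoint.symm
    have e1 := gsign_union_left hd (S \ T)
    rw [hTT] at e1
    rw [hF]
    simp only []
    rw [hTT, e1]
    push_cast
    ring
  have RHS : gmul f (gmul g h) S = ∑ T ∈ S.powerset, ∑ U ∈ (S \ T).powerset, F T U := by
    rw [gmul]
    refine Finset.sum_congr rfl fun T hT => ?_
    rw [gmul, Finset.mul_sum]
    refine Finset.sum_congr rfl fun U hU => ?_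
    rw [Finset.mem_powerset] at hT hU
    have e2 : S \ (T ∪ U) = (S \ T) \ U := by
      rw [sdiff_sdiff_left, Finset.sup_eq_union]
    have hUs : U ∪ ((S \ T) \ U) = S \ T := union_sdiff_of_subset hU
    have hd : Disjoint U ((S \ T) \ U) := sdiff_disjoint.symm
    have e1 := gsign_union_right T hd
    rw [hUs] at e1
    rw [hF]
    simp only []
    rw [e2, e1]
    push_cast
    ring
  rw [LHS, RHS, sum_powerset_sdiff]

lemma gmul_one (f : Grassmann n R) : gmul f gone = f := by
  funext S
  rw [gmul]
  rw [Finset.sum_eq_single S]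
  · simp [gone, gsign_empty_right]
  · intro b hb hbS
    rw [Finset.mem_powerset] at hb
    have : S \ b ≠ ∅ := by
      intro hc
      exact hbS (subset_antisymm hb (sdiff_eq_empty_iff_subset.1 hc))
    simp [gone, this]
  · intro h; exact absurd (mem_powerset_self S) h

lemma gone_mul (f : Grassmann n R) : gmul gone f = f := by
  funext S
  rw [gmul]
  rw [Finset.sum_eq_single ∅]
  · simp [gone, gsign_empty_left]
  · intro b _ hb; simp [gone, hb]
  · intro h; exact absurd (empty_mem_powerset S) h

lemma Gadd_apply (f g : G n R) (S : Finset (Fin (2*n))) : (f + g) S = f S + g S := rfl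
lemma Gsmul_apply (r : R) (f : G n R) (S : Finset (Fin (2*n))) : (r • f) S = r * f S := rfl
lemma Gzero_apply (S : Finset (Fin (2*n))) : (0 : G n R) S = 0 := rfl

instance : Ring (G n R) where
  __ := (inferInstance : AddCommGroup (G n R))
  mul := gmul
  one := gone
  mul_assoc := gmul_assoc
  one_mul := gone_mul
  mul_one := gmul_one
  left_distrib := fun f g h => by
    funext S
    show gmul f (g + h) S = gmul f g S + gmul f h S
    simp only [gmul, Gadd_apply, mul_add, Finset.sum_add_distrib]
  right_distrib := fun f g h => by
    funext S
    show gmul (f + g) h S = gmul f h S + gmul g h S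
    simp only [gmul, Gadd_apply, add_mul, mul_add, Finset.sum_add_distrib]
  zero_mul := fun f => by
    funext S
    show gmul 0 f S = 0
    simp [gmul]
  mul_zero := fun f => by
    funext S
    show gmul f 0 S = 0
    simp [gmul]

lemma mul_def (f g : G n R) : f * g = gmul f g := rfl
lemma one_def : (1 : G n R) = gone := rfl

instance : Algebra R (G n R) :=
  Algebra.ofModule
    (fun r f g => by
      funext S
      show gmul (r • f) g S = r * gmul f g S
      simp only [gmul, Gsmul_apply, Finset.mul_sum]
      exact Finset.sum_congr rfl fun T _ => by ring)
    (fun r f g => by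
      funext S
      show gmul f (r • g) S = r * gmul f g S
      simp only [gmul, Gsmul_apply, Finset.mul_sum]
      exact Finset.sum_congr rfl fun T _ => by ring)

end BZ
end Part2
section Part3
namespace BZ

variable {n : ℕ} {R : Type*} [CommRing R]

def gmono (T : Finset (Fin (2 * n))) : G n R := fun S => if S = T then (1 : R) else 0

lemma gone_eq_gmono : (1 : G n R) = gmono ∅ := rfl

lemma Gsum_apply {ι : Type*} (s : Finset ι) (F : ι → G n R) (S : Finset (Fin (2 * n))) :
    (∑ i ∈ s, F i) S = ∑ i ∈ s, F i S := by
  classical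
  induction s using Finset.induction_on with
  | empty => simp [Gzero_apply]
  | insert x s hx ih => rw [Finset.sum_insert hx, Finset.sum_insert hx, Gadd_apply, ih]

lemma gmono_mul_gmono {T U : Finset (Fin (2 * n))} (h : Disjoint T U) :
    (gmono T * gmono U : G n R) = ((gsign T U : ℤ) : R) • gmono (T ∪ U) := by
  funext S
  rw [mul_def]; unfold gmul; rw [Gsmul_apply]
  by_cases hS : S = T ∪ U
  · subst hS
    rw [Finset.sum_eq_single T]
    · rw [union_sdiff_cancel_left h]
      simp [gmono]
    · intro b _ hb
      simp [gmono, hb]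
    · intro hc
      exact absurd (Finset.mem_powerset.2 subset_union_left) hc
  · rw [Finset.sum_eq_zero, gmono, if_neg hS, mul_zero]
    intro b hb
    rw [Finset.mem_powerset] at hb
    by_cases hbT : b = T
    · subst hbT
      have : S \ b ≠ U := by
        intro hc
        exact hS (by rw [← union_sdiff_of_subset hb, hc])
      simp [gmono, this]
    · simp [gmono, hbT]

lemma gmono_mul_gmono_zero {T U : Finset (Fin (2 * n))} (h : ¬ Disjoint T U) :
    (gmono T * gmono U : G n R) = 0 := by
  funext S
  rw [mul_def]; unfold gmul; rw [Gzero_apply]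
  refine Finset.sum_eq_zero fun b _ => ?_
  by_cases hbT : b = T
  · subst hbT
    have : S \ b ≠ U := by
      intro hc
      exact h (by rw [← hc]; exact sdiff_disjoint.symm)
    simp [gmono, this]
  · simp [gmono, hbT]

def Deg2 (f : G n R) : Prop := ∀ S, f S ≠ 0 → S.card = 2

lemma Deg2.sum {ι : Type*} {s : Finset ι} {F : ι → G n R} (h : ∀ i ∈ s, Deg2 (F i)) :
    Deg2 (∑ i ∈ s, F i) := by
  intro S hS
  rw [Gsum_apply] at hS
  obtain ⟨i, hi, hne⟩ := Finset.exists_ne_zero_of_sum_ne_zero hS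
  exact h i hi S hne

lemma Deg2.neg {f : G n R} (h : Deg2 f) : Deg2 (-f) := by
  intro S hS
  refine h S fun hc => hS ?_
  show -(f S) = 0
  rw [hc, neg_zero]

lemma Deg2.smul {f : G n R} (r : R) (h : Deg2 f) : Deg2 (r • f) := by
  intro S hS
  rw [Gsmul_apply] at hS
  exact h S fun hc => hS (by rw [hc, mul_zero])

lemma gmul_comm_of_deg2 {f g : G n R} (hf : Deg2 f) (hg : Deg2 g) : f * g = g * f := by
  funext S
  rw [mul_def, mul_def]; unfold gmul
  apply Finset.sum_nbij' (i := fun T => S \ T) (j := fun T => S \ T)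
  · intro a ha
    exact Finset.mem_powerset.2 sdiff_subset
  · intro a ha
    exact Finset.mem_powerset.2 sdiff_subset
  · intro a ha
    exact Finset.sdiff_sdiff_eq_self (Finset.mem_powerset.1 ha)
  · intro a ha
    exact Finset.sdiff_sdiff_eq_self (Finset.mem_powerset.1 ha)
  · intro a ha
    rw [Finset.mem_powerset] at ha
    rw [Finset.sdiff_sdiff_eq_self ha]
    by_cases hfa : f a = 0
    · rw [hfa]; ring
    by_cases hgb : g (S \ a) = 0
    · rw [hgb]; ring
    have := gsign_swap (T := a) (U := S \ a) sdiff_disjoint.symm (hf a hfa) (hg _ hgb)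
    rw [this]
    ring

lemma commute_of_deg2 {f g : G n R} (hf : Deg2 f) (hg : Deg2 g) : Commute f g :=
  gmul_comm_of_deg2 hf hg

lemma gpow_eq_pow (f : G n R) (k : ℕ) : gpow f k = f ^ k := by
  induction k with
  | zero => rw [pow_zero]; rfl
  | succ k ih =>
    show gmul f (gpow f k) = f ^ (k + 1)
    exact (congrArg (f * ·) ih).trans (pow_succ' f k).symm

lemma gpow_eq_zero_of_card {f : G n R} (hf : Deg2 f) :
    ∀ (k : ℕ) (S : Finset (Fin (2 * n))), S.card ≠ 2 * k → gpow f k S = 0 := by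
  intro k
  induction k with
  | zero =>
    intro S hS
    have : S ≠ ∅ := fun hc => hS (by rw [hc]; simp)
    show gone S = 0
    rw [gone, if_neg this]
  | succ k ih =>
    intro S hS
    show gmul f (gpow f k) S = 0
    unfold gmul
    refine Finset.sum_eq_zero fun T hT => ?_
    rw [Finset.mem_powerset] at hT
    by_cases hfT : f T = 0
    · rw [hfT, mul_zero, zero_mul]
    have hcT : T.card = 2 := hf T hfT
    have hcS : (S \ T).card = S.card - 2 := by
      rw [Finset.card_sdiff_of_subset hT, hcT]
    have : (S \ T).card ≠ 2 * k := by
      rw [hcS]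
      have := Finset.card_le_card hT
      omega
    rw [ih _ this, mul_zero]

end BZ
end Part3
section Part4
namespace BZ

variable {n : ℕ} {R : Type*} [CommRing R]

lemma natCast_mul_comm (y : G n R) (m : ℕ) : y * (m : G n R) = m • y := by
  rw [nsmul_eq_mul, (Nat.cast_commute m y).eq]

lemma list_sum_pow {ι : Type*} (r : ι → G n R) :
    ∀ (l : List ι) (k : ℕ),
      (∀ x ∈ l, ∀ y ∈ l, Commute (r x) (r y)) →
      (∀ x ∈ l, r x * r x = 0) →
      ((l.map r).sum) ^ k
        = k.factorial • (((List.sublistsLen k l).map fun m => (m.map r).prod).sum) := by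
  intro l
  induction l with
  | nil =>
    intro k _ _
    cases k with
    | zero => simp
    | succ k =>
      rw [List.sublistsLen_of_length_lt (by simp)]
      simp [zero_pow (Nat.succ_ne_zero k)]
  | cons a t ih =>
    intro k hcomm hsq
    have hcommt : ∀ x ∈ t, ∀ y ∈ t, Commute (r x) (r y) := fun x hx y hy =>
      hcomm x (List.mem_cons_of_mem _ hx) y (List.mem_cons_of_mem _ hy)
    have hsqt : ∀ x ∈ t, r x * r x = 0 := fun x hx => hsq x (List.mem_cons_of_mem _ hx)
    have hca : Commute (r a) ((t.map r).sum) := by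
      apply Commute.list_sum_right
      intro x hx
      obtain ⟨b, hb, rfl⟩ := List.mem_map.1 hx
      exact hcomm a (List.mem_cons_self) b (List.mem_cons_of_mem _ hb)
    cases k with
    | zero => simp
    | succ k =>
      have hzero : ∀ i ∈ Finset.range k,
          r a ^ (i + 1 + 1) * ((t.map r).sum) ^ (k + 1 - (i + 1 + 1))
            * (((k+1).choose (i + 1 + 1) : ℕ) : G n R) = 0 := by
        intro i _
        have : r a ^ (i + 1 + 1) = r a ^ i * (r a * r a) := by
          rw [pow_succ, pow_succ, mul_assoc]
        rw [this, hsq a List.mem_cons_self, mul_zero, zero_mul, zero_mul]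
      have hL : (r a + (t.map r).sum) ^ (k+1)
          = ((t.map r).sum) ^ (k+1) + r a * ((t.map r).sum) ^ k * (((k+1 : ℕ)) : G n R) := by
        rw [Commute.add_pow hca, Finset.sum_range_succ', Finset.sum_range_succ',
          Finset.sum_eq_zero hzero, zero_add]
        simp only [zero_add, pow_zero, pow_one, one_mul, Nat.choose_zero_right,
          Nat.choose_one_right, Nat.cast_one, mul_one, Nat.add_sub_cancel, Nat.sub_zero]
        rw [add_comm]
      have e2 : (((List.sublistsLen k t).map (List.cons a)).map fun m => (m.map r).prod)
          = (List.sublistsLen k t).map fun m => r a * (m.map r).prod := by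
        rw [List.map_map]
        exact List.map_congr_left fun m _ => by simp
      rw [List.map_cons, List.sum_cons, hL, List.sublistsLen_succ_cons, List.map_append,
        List.sum_append, smul_add, ih (k+1) hcommt hsqt]
      congr 1
      rw [e2, ih k hcommt hsqt, natCast_mul_comm, mul_smul_comm, List.sum_map_mul_left,
        smul_smul, ← Nat.factorial_succ]

end BZ
end Part4
section Part5
namespace BZ

variable {n : ℕ} {R : Type*} [CommRing R]

def pgen (j : Fin n) : Fin (2 * n) := ⟨2 * j.1, by have := j.2; omega⟩
def bgen (i : Fin n) : Fin (2 * n) := ⟨2 * i.1 + 1, by have := i.2; omega⟩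

/-- The quadratic monomial `ψ̄ᵢψⱼ` as an element of the ring `G`. -/
def mG (i j : Fin n) : G n R := (gmono {bgen i} : G n R) * gmono {pgen j}

lemma mG_eq_gmul (i j : Fin n) : (mG i j : G n R) = gmul (psibar i) (psi j) := rfl

lemma bgen_ne_pgen (i j : Fin n) : bgen i ≠ pgen j := by
  intro h
  have := congrArg Fin.val h
  simp only [bgen, pgen] at this
  omega

lemma bgen_inj {i k : Fin n} (h : i ≠ k) : bgen i ≠ bgen k := by
  intro hc
  have := congrArg Fin.val hc
  simp only [bgen, pgen] at this
  exact h (Fin.ext (by omega))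

lemma pgen_inj {j l : Fin n} (h : j ≠ l) : pgen j ≠ pgen l := by
  intro hc
  have := congrArg Fin.val hc
  simp only [bgen, pgen] at this
  exact h (Fin.ext (by omega))

lemma pair_eq_union (a b : Fin (2 * n)) :
    ({a, b} : Finset (Fin (2 * n))) = {a} ∪ {b} := by
  rw [Finset.insert_eq]

lemma m_def (i j : Fin n) :
    (mG i j : G n R) = ((gsign {bgen i} {pgen j} : ℤ) : R) • gmono {bgen i, pgen j} := by
  have h : Disjoint ({bgen i} : Finset (Fin (2 * n))) {pgen j} :=
    Finset.disjoint_singleton.2 (bgen_ne_pgen i j)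
  rw [mG, gmono_mul_gmono h, pair_eq_union]

lemma deg2_gmono {T : Finset (Fin (2 * n))} (h : T.card = 2) : Deg2 (gmono T : G n R) := by
  intro S hS
  have : S = T := by
    by_contra hc
    exact hS (by simp [gmono, hc])
  rw [this, h]

lemma deg2_m (i j : Fin n) : Deg2 (mG i j : G n R) := by
  rw [m_def]
  refine Deg2.smul _ (deg2_gmono ?_)
  rw [Finset.card_insert_of_notMem (by simp [(bgen_ne_pgen i j)]), Finset.card_singleton]

def rowE (i : Fin n) (v : Fin n → R) : G n R := - ∑ j, v j • (mG i j : G n R)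

lemma deg2_rowE (i : Fin n) (v : Fin n → R) : Deg2 (rowE i v) :=
  Deg2.neg (Deg2.sum fun j _ => Deg2.smul _ (deg2_m i j))

lemma smul_gmono_mul (s t : ℤ) {T U : Finset (Fin (2 * n))} (h : Disjoint T U) :
    (((s : ℤ) : R) • (gmono T : G n R)) * (((t : ℤ) : R) • (gmono U : G n R))
      = ((s * t * gsign T U : ℤ) : R) • (gmono (T ∪ U) : G n R) := by
  rw [smul_mul_assoc, mul_smul_comm, gmono_mul_gmono h, smul_smul, smul_smul]
  push_cast
  ring_nf

lemma smul_gmono_mul_zero (s t : ℤ) {T U : Finset (Fin (2 * n))} (h : ¬ Disjoint T U) :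
    (((s : ℤ) : R) • (gmono T : G n R)) * (((t : ℤ) : R) • (gmono U : G n R)) = 0 := by
  rw [smul_mul_assoc, mul_smul_comm, gmono_mul_gmono_zero h, smul_zero, smul_zero]

lemma rowE_mul_rowE (i k : Fin n) (v w : Fin n → R) :
    rowE i v * rowE k w
      = ∑ j, ∑ l, (v j * w l) • ((mG i j : G n R) * mG k l) := by
  rw [rowE, rowE, neg_mul_neg, Finset.sum_mul]
  refine Finset.sum_congr rfl fun j _ => ?_
  rw [Finset.mul_sum]
  refine Finset.sum_congr rfl fun l _ => ?_
  rw [smul_mul_assoc, mul_smul_comm, smul_smul]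

lemma rowE_sq (i : Fin n) (v : Fin n → R) : rowE i v * rowE i v = 0 := by
  rw [rowE_mul_rowE]
  refine Finset.sum_eq_zero fun j _ => Finset.sum_eq_zero fun l _ => ?_
  rw [m_def, m_def, smul_gmono_mul_zero, smul_zero]
  exact Finset.not_disjoint_iff.2
    ⟨bgen i, Finset.mem_insert_self _ _, Finset.mem_insert_self _ _⟩

lemma gsign_pair_expand {a b c d : Fin (2 * n)} (hab : a ≠ b) (hcd : c ≠ d) :
    gsign ({a, b} : Finset (Fin (2 * n))) {c, d}
      = gsign {a} {c} * gsign {a} {d} * gsign {b} {c} * gsign {b} {d} := by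
  rw [pair_eq_union a b, gsign_union_left (Finset.disjoint_singleton.2 hab),
    pair_eq_union c d, gsign_union_right _ (Finset.disjoint_singleton.2 hcd),
    gsign_union_right _ (Finset.disjoint_singleton.2 hcd)]
  ring

lemma sign_antisym {i k j l : Fin n} (hjl : j ≠ l) :
    gsign ({bgen i} : Finset (Fin (2 * n))) {pgen j} * gsign {bgen k} {pgen l}
        * gsign ({bgen i, pgen j} : Finset (Fin (2 * n))) {bgen k, pgen l}
      = - (gsign ({bgen i} : Finset (Fin (2 * n))) {pgen l} * gsign {bgen k} {pgen j}
        * gsign ({bgen i, pgen l} : Finset (Fin (2 * n))) {bgen k, pgen j}) := by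
  rw [gsign_pair_expand (bgen_ne_pgen i j) (bgen_ne_pgen k l),
    gsign_pair_expand (bgen_ne_pgen i l) (bgen_ne_pgen k j)]
  rw [gsign_single_swap (bgen_ne_pgen k l),
    gsign_single_swap (pgen_inj hjl),
    gsign_single_swap (bgen_ne_pgen k j).symm]
  ring

end BZ
end Part5
section Part6
namespace BZ

variable {n : ℕ} {R : Type*} [CommRing R]

lemma pair_disjoint {a b c d : Fin (2 * n)} (h1 : a ≠ c) (h2 : a ≠ d) (h3 : b ≠ c)
    (h4 : b ≠ d) : Disjoint ({a, b} : Finset (Fin (2 * n))) {c, d} := by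
  rw [Finset.disjoint_left]
  intro x hx hy
  simp only [Finset.mem_insert, Finset.mem_singleton] at hx hy
  rcases hx with rfl | rfl <;> rcases hy with h | h <;> simp_all

lemma mG_mul_diag_zero (i k j : Fin n) : (mG i j : G n R) * mG k j = 0 := by
  rw [m_def, m_def, smul_gmono_mul_zero]
  exact Finset.not_disjoint_iff.2
    ⟨pgen j, Finset.mem_insert_of_mem (Finset.mem_singleton_self _),
      Finset.mem_insert_of_mem (Finset.mem_singleton_self _)⟩

lemma rowE_mul_rowE_eq_zero {i k : Fin n} (hik : i ≠ k) (v : Fin n → R) :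
    rowE i v * rowE k v = 0 := by
  rw [rowE_mul_rowE, ← Finset.sum_product']
  have hdiag : ∀ j : Fin n, (v j * v j) • ((mG i j : G n R) * mG k j) = 0 := fun j => by
    rw [mG_mul_diag_zero, smul_zero]
  apply Finset.sum_involution (g := fun p _ => (p.2, p.1))
  · rintro ⟨j, l⟩ _
    by_cases hjl : j = l
    · subst hjl
      simp only [hdiag, add_zero]
    · have hd1 : Disjoint ({bgen i, pgen j} : Finset (Fin (2 * n))) {bgen k, pgen l} :=
        pair_disjoint (bgen_inj hik) (bgen_ne_pgen i l) (bgen_ne_pgen k j).symm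
          (pgen_inj hjl)
      have hd2 : Disjoint ({bgen i, pgen l} : Finset (Fin (2 * n))) {bgen k, pgen j} :=
        pair_disjoint (bgen_inj hik) (bgen_ne_pgen i j) (bgen_ne_pgen k l).symm
          (pgen_inj (Ne.symm hjl))
      have hE : ({bgen i, pgen j} : Finset (Fin (2 * n))) ∪ {bgen k, pgen l}
          = ({bgen i, pgen l} : Finset (Fin (2 * n))) ∪ {bgen k, pgen j} := by
        ext x
        simp only [Finset.mem_union, Finset.mem_insert, Finset.mem_singleton]
        tauto
      show (v j * v l) • ((mG i j : G n R) * mG k l)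
          + (v l * v j) • ((mG i l : G n R) * mG k j) = 0
      rw [m_def, m_def, m_def, m_def, smul_gmono_mul _ _ hd1, smul_gmono_mul _ _ hd2,
        smul_smul, smul_smul, hE, ← add_smul]
      convert zero_smul R _
      have hs := sign_antisym (n := n) (i := i) (k := k) hjl
      have this2 : (gsign ({bgen i} : Finset (Fin (2*n))) {pgen l} * gsign {bgen k} {pgen j}
          * gsign ({bgen i, pgen l} : Finset (Fin (2*n))) {bgen k, pgen j})
          = - (gsign ({bgen i} : Finset (Fin (2*n))) {pgen j} * gsign {bgen k} {pgen l}
          * gsign ({bgen i, pgen j} : Finset (Fin (2*n))) {bgen k, pgen l}) := by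
        rw [hs]; ring
      have hc : ((gsign ({bgen i} : Finset (Fin (2*n))) {pgen l} * gsign {bgen k} {pgen j}
            * gsign ({bgen i, pgen l} : Finset (Fin (2*n))) {bgen k, pgen j} : ℤ) : R)
          = - ((gsign ({bgen i} : Finset (Fin (2*n))) {pgen j} * gsign {bgen k} {pgen l}
            * gsign ({bgen i, pgen j} : Finset (Fin (2*n))) {bgen k, pgen l} : ℤ) : R) := by
        rw [this2, Int.cast_neg]
      rw [hc, mul_comm (v l) (v j)]
      ring
  · rintro ⟨j, l⟩ _ hne hc
    have hlj : l = j := congrArg Prod.fst hc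
    subst hlj
    exact hne (hdiag l)
  · rintro ⟨j, l⟩ _; exact Finset.mem_univ _
  · rintro ⟨j, l⟩ _; rfl

/- ### block products -/

def block (i : Fin n) : Finset (Fin (2 * n)) := {pgen i, bgen i}

lemma mem_block {x : Fin (2 * n)} {i : Fin n} :
    x ∈ block i ↔ x = pgen i ∨ x = bgen i := by
  simp [block]

lemma block_val {x : Fin (2 * n)} {i : Fin n} (h : x ∈ block i) :
    2 * i.1 ≤ x.1 ∧ x.1 ≤ 2 * i.1 + 1 := by
  rcases mem_block.1 h with rfl | rfl <;> simp [pgen, bgen]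

lemma gsign_eq_one_of_lt {T U : Finset (Fin (2 * n))} (h : ∀ t ∈ T, ∀ u ∈ U, t < u) :
    gsign T U = 1 := by
  rw [gsign]
  have : ((T ×ˢ U).filter fun q => q.2 < q.1) = ∅ := by
    rw [Finset.filter_eq_empty_iff]
    rintro ⟨t, u⟩ hq
    rw [Finset.mem_product] at hq
    exact asymm (h t hq.1 u hq.2)
  rw [this, Finset.card_empty, pow_zero]

def blockUnion (l : List (Fin n)) : Finset (Fin (2 * n)) :=
  l.foldr (fun i acc => block i ∪ acc) ∅

lemma mem_blockUnion {x : Fin (2 * n)} {l : List (Fin n)} :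
    x ∈ blockUnion l ↔ ∃ i ∈ l, x ∈ block i := by
  induction l with
  | nil => simp [blockUnion]
  | cons a t ih => simp [blockUnion, Finset.mem_union, ih.symm]

lemma blocks_prod :
    ∀ l : List (Fin n), l.Pairwise (· < ·) →
      ((l.map fun i => (gmono (block i) : G n R)).prod) = gmono (blockUnion l) := by
  intro l
  induction l with
  | nil =>
    intro _
    show (1 : G n R) = gmono ∅
    exact gone_eq_gmono
  | cons a t ih =>
    intro hp
    rw [List.pairwise_cons] at hp
    have hlt : ∀ x ∈ block a, ∀ y ∈ blockUnion t, x < y := by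
      intro x hx y hy
      obtain ⟨b, hb, hyb⟩ := mem_blockUnion.1 hy
      have h1 := block_val hx
      have h2 := block_val hyb
      have hab : a.1 < b.1 := hp.1 b hb
      exact Fin.mk_lt_mk.2 (by omega)
    have hdisj : Disjoint (block a) (blockUnion t) := by
      rw [Finset.disjoint_left]
      intro x hx hy
      exact absurd rfl (ne_of_lt (hlt x hx x hy))
    rw [List.map_cons, List.prod_cons, ih hp.2, gmono_mul_gmono hdisj,
      gsign_eq_one_of_lt hlt]
    show ((1 : ℤ) : R) • gmono (block a ∪ blockUnion t) = _
    rw [Int.cast_one, one_smul]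
    rfl

lemma blockUnion_finRange : blockUnion (List.finRange n) = (Finset.univ : Finset (Fin (2 * n))) := by
  ext x
  simp only [Finset.mem_univ, iff_true, mem_blockUnion]
  refine ⟨⟨x.1 / 2, by have := x.2; omega⟩, List.mem_finRange _, ?_⟩
  rw [mem_block]
  rcases Nat.even_or_odd x.1 with ⟨m, hm⟩ | ⟨m, hm⟩
  · left; apply Fin.ext; simp [pgen]; omega
  · right; apply Fin.ext; simp [bgen]; omega

end BZ
end Part6
section Part7
namespace BZ

variable {n : ℕ} {R : Type*} [CommRing R]

lemma Gneg_apply (f : G n R) (S : Finset (Fin (2*n))) : (-f) S = -(f S) := rfl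
lemma Gnsmul_apply (k : ℕ) (f : G n R) (S : Finset (Fin (2*n))) : (k • f) S = k • (f S) := rfl

def LMap (n : ℕ) (R : Type*) [CommRing R] (i : Fin n) : (Fin n → R) →ₗ[R] G n R where
  toFun v := rowE i v
  map_add' v w := by
    simp only [rowE]
    rw [← neg_add, ← Finset.sum_add_distrib]
    congr 1
    refine Finset.sum_congr rfl fun j _ => ?_
    rw [Pi.add_apply, add_smul]
  map_smul' c v := by
    simp only [rowE, RingHom.id_apply]
    rw [smul_neg, Finset.smul_sum]
    congr 1
    refine Finset.sum_congr rfl fun j _ => ?_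
    rw [Pi.smul_apply, smul_eq_mul, smul_smul]

def evG (n : ℕ) (R : Type*) [CommRing R] : G n R →ₗ[R] R where
  toFun f := f Finset.univ
  map_add' f g := rfl
  map_smul' c f := rfl

noncomputable def M (n : ℕ) (R : Type*) [CommRing R] :
    MultilinearMap R (fun _ : Fin n => (Fin n → R)) R :=
  (evG n R).compMultilinearMap
    ((MultilinearMap.mkPiAlgebraFin R n (G n R)).compLinearMap (LMap n R))

lemma M_apply (v : Fin n → Fin n → R) :
    M n R v = ((List.ofFn fun i => rowE i (v i)).prod : G n R) Finset.univ := rfl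

noncomputable def Malt (n : ℕ) (R : Type*) [CommRing R] :
    (Fin n → R) [⋀^Fin n]→ₗ[R] R :=
  { M n R with
    map_eq_zero_of_eq' := by
      intro v i j hv hij
      show M n R v = 0
      rw [M_apply]
      set F : Fin n → G n R := fun a => rowE a (v a) with hF
      have hperm : List.Perm (List.finRange n) (i :: j :: (((List.finRange n).erase i).erase j)) := by
        have p1 : List.Perm (List.finRange n) (i :: (List.finRange n).erase i) :=
          List.perm_cons_erase (List.mem_finRange i)
        have hj : j ∈ (List.finRange n).erase i :=
          (List.mem_erase_of_ne hij.symm).2 (List.mem_finRange j)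
        have p2 : List.Perm ((List.finRange n).erase i) (j :: ((List.finRange n).erase i).erase j) :=
          List.perm_cons_erase hj
        exact p1.trans (p2.cons i)
      have hpair : (List.ofFn F).Pairwise Commute := by
        rw [List.ofFn_eq_map]
        refine List.pairwise_map.2 ?_
        exact (List.pairwise_lt_finRange n).imp
          (fun _ => commute_of_deg2 (deg2_rowE _ _) (deg2_rowE _ _))
      have hmap : List.Perm (List.ofFn F) (F i :: F j :: ((((List.finRange n).erase i).erase j).map F)) := by
        rw [List.ofFn_eq_map]
        simpa using hperm.map F
      rw [hmap.prod_eq' hpair, List.prod_cons, List.prod_cons, ← mul_assoc]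
      have hzero : F i * F j = 0 := by
        show rowE i (v i) * rowE j (v j) = 0
        rw [hv]
        exact rowE_mul_rowE_eq_zero hij (v j)
      rw [hzero, zero_mul]
      rfl }

lemma rowE_single (i : Fin n) : rowE i (Pi.single i (1 : R)) = gmono (block i) := by
  have hsum : (∑ j, (Pi.single i (1 : R) : Fin n → R) j • (mG i j : G n R)) = mG i i := by
    rw [Finset.sum_eq_single i]
    · rw [Pi.single_eq_same, one_smul]
    · intro b _ hb
      rw [Pi.single_eq_of_ne hb, zero_smul]
    · intro h; exact absurd (Finset.mem_univ i) h
  rw [rowE, hsum, m_def]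
  have hlt : pgen i < bgen i := Fin.mk_lt_mk.2 (by omega)
  rw [gsign_single_single, if_pos hlt, Int.cast_neg, Int.cast_one, neg_smul, neg_neg,
    one_smul, Finset.pair_comm]
  rfl

lemma M_basis : M n R (fun i => Pi.basisFun R (Fin n) i) = 1 := by
  rw [M_apply]
  have he : (List.ofFn fun i => rowE i ((Pi.basisFun R (Fin n)) i))
      = List.ofFn fun i => (gmono (block i) : G n R) := by
    congr 1
    funext i
    rw [Pi.basisFun_apply, rowE_single]
  rw [he, List.ofFn_eq_map, blocks_prod _ (List.pairwise_lt_finRange n), blockUnion_finRange]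
  show (if (Finset.univ : Finset (Fin (2*n))) = Finset.univ then (1:R) else 0) = 1
  rw [if_pos rfl]

lemma M_det (A : Matrix (Fin n) (Fin n) R) : M n R (fun i => A i) = A.det := by
  have h := (Malt n R).eq_smul_basis_det (Pi.basisFun R (Fin n))
  have h2 := DFunLike.congr_fun h (fun i => A i)
  have h3 : M n R (fun i => A i) = Malt n R (fun i => A i) := rfl
  have hb : Malt n R ⇑(Pi.basisFun R (Fin n)) = (1 : R) := M_basis
  rw [h3, h2, AlternatingMap.smul_apply, hb, one_smul, Pi.basisFun_det]
  rfl

end BZ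
end Part7
/-- Berezin integral representation of the determinant: for any `n×n` matrix `A` over a
commutative ring (with `ℚ`-algebra structure so that the exponential makes sense),
`det A = ∫ dψ̄ dψ e^{−ψ̄Aψ}`. -/
theorem berezin_det {R : Type*} [CommRing R] [Algebra ℚ R] {n : ℕ}
    (A : Matrix (Fin n) (Fin n) R) :
    berezin (gexp (-quadForm A)) = A.det := by
  classical
  have hq : (-quadForm A : Grassmann n R) = (∑ i, BZ.rowE i (A i) : BZ.G n R) := by
    funext S
    rw [BZ.Gsum_apply]
    show -(quadForm A S) = _
    rw [quadForm, ← Finset.sum_neg_distrib]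
    refine Finset.sum_congr rfl fun i _ => ?_
    show -(∑ j, A i j * gmul (psibar i) (psi j) S) = BZ.rowE i (A i) S
    rw [BZ.rowE, BZ.Gneg_apply, BZ.Gsum_apply]
    refine neg_inj.2 (Finset.sum_congr rfl fun j _ => ?_)
    rw [BZ.Gsmul_apply, ← BZ.mG_eq_gmul]
  have hdeg : BZ.Deg2 (∑ i, BZ.rowE i (A i) : BZ.G n R) :=
    BZ.Deg2.sum fun i _ => BZ.deg2_rowE i (A i)
  have hcard : (Finset.univ : Finset (Fin (2 * n))).card = 2 * n := by
    rw [Finset.card_univ, Fintype.card_fin]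
  show (∑ k ∈ Finset.range (2 * n + 1),
      algebraMap ℚ R ((Nat.factorial k : ℚ))⁻¹ * gpow (-quadForm A) k Finset.univ) = A.det
  rw [hq]
  have key : gpow (∑ i, BZ.rowE i (A i) : BZ.G n R) n Finset.univ
      = (Nat.factorial n : R) * A.det := by
    rw [BZ.gpow_eq_pow, Fin.sum_univ_def]
    have hcomm : ∀ x ∈ List.finRange n, ∀ y ∈ List.finRange n,
        Commute (BZ.rowE x (A x)) (BZ.rowE y (A y)) := fun x _ y _ =>
      BZ.commute_of_deg2 (BZ.deg2_rowE _ _) (BZ.deg2_rowE _ _)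
    have hsq : ∀ x ∈ List.finRange n, BZ.rowE x (A x) * BZ.rowE x (A x) = 0 := fun x _ =>
      BZ.rowE_sq x (A x)
    rw [BZ.list_sum_pow (fun i => BZ.rowE i (A i)) (List.finRange n) n hcomm hsq]
    have hsub : List.sublistsLen n (List.finRange n) = [List.finRange n] := by
      have := List.sublistsLen_length (List.finRange n)
      rwa [List.length_finRange] at this
    rw [hsub, List.map_singleton, List.sum_singleton, BZ.Gnsmul_apply, nsmul_eq_mul]
    congr 1
    have : ((List.finRange n).map fun i => BZ.rowE i (A i)).prod Finset.univ
        = BZ.M n R (fun i => A i) := by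
      rw [BZ.M_apply (fun i => A i), List.ofFn_eq_map]
    rw [this, BZ.M_det]
  rw [Finset.sum_eq_single n]
  · rw [key, ← mul_assoc]
    have h1 : algebraMap ℚ R ((Nat.factorial n : ℚ))⁻¹ * (Nat.factorial n : R) = 1 := by
      rw [← map_natCast (algebraMap ℚ R) (Nat.factorial n), ← map_mul, inv_mul_cancel₀, map_one]
      exact_mod_cast n.factorial_ne_zero
    rw [h1, one_mul]
  · intro k hk hkn
    rw [BZ.gpow_eq_zero_of_card hdeg k Finset.univ (by omega), mul_zero]
  · intro h
    exact absurd (Finset.mem_range.2 (by omega)) h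
end

section
/- The Moyal ⋆-product has the trace property: for Schwartz functions f,g on ℝ^D with Θ a nondegenerate skew-symmetric D×D matrix, ∫ (f ⋆ g)(x) dx = ∫ f(x)g(x) dx = ∫ (g ⋆ f)(x) dx. -/
open MeasureTheory Matrix

/-- The Moyal ⋆-product on `ℝ^D` associated with a `D×D` matrix `Θ`:
`(f⋆g)(x) = (π^D |det Θ|)⁻¹ ∫∫ f(x+y) g(x+z) e^{−2i y·Θ⁻¹z} dy dz`. -/
noncomputable def moyal (D : ℕ) (Θ : Matrix (Fin D) (Fin D) ℝ)
    (f g : (Fin D → ℝ) → ℂ) : (Fin D → ℝ) → ℂ :=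
  fun x =>
    (((Real.pi ^ D * |Θ.det|)⁻¹ : ℝ) : ℂ) *
      ∫ y : Fin D → ℝ, ∫ z : Fin D → ℝ,
        f (x + y) * g (x + z) *
          Complex.exp (-2 * Complex.I * ((∑ a, ∑ b, y a * Θ⁻¹ a b * z b : ℝ) : ℂ))

namespace MoyalTraceAux

open Complex SchwartzMap Real
open scoped FourierTransform RealInnerProductSpace

variable {D : ℕ}

lemma integral_pi_eq_euclid {G : Type*} [NormedAddCommGroup G] [NormedSpace ℝ G]
    (h : (Fin D → ℝ) → G) :
    (∫ y : Fin D → ℝ, h y) = ∫ x : EuclideanSpace ℝ (Fin D), h x :=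
  ((EuclideanSpace.volume_preserving_symm_measurableEquiv_toLp (Fin D)).integral_comp
    (MeasurableEquiv.measurableEmbedding _) h).symm

/-- A Schwartz function on `Fin D → ℝ` seen as a Schwartz function on Euclidean space. -/
noncomputable def toE (g : SchwartzMap (Fin D → ℝ) ℂ) : SchwartzMap (EuclideanSpace ℝ (Fin D)) ℂ :=
  compCLMOfContinuousLinearEquiv ℝ (PiLp.continuousLinearEquiv 2 ℝ fun _ : Fin D => ℝ) g

/-- The Fourier transform, pulled back to `Fin D → ℝ`. -/
noncomputable def hatV (g : SchwartzMap (Fin D → ℝ) ℂ) : SchwartzMap (Fin D → ℝ) ℂ :=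
  compCLMOfContinuousLinearEquiv ℝ (PiLp.continuousLinearEquiv 2 ℝ fun _ : Fin D => ℝ).symm
    (fourierTransformCLM ℂ (toE g))

lemma hatV_apply (g : SchwartzMap (Fin D → ℝ) ℂ) (w : Fin D → ℝ) :
    hatV g w = 𝓕 (⇑(toE g)) (WithLp.toLp 2 w) := by
  simp [hatV, toE]; rfl

lemma fourier_eq (g : SchwartzMap (Fin D → ℝ) ℂ) (w : Fin D → ℝ) :
    (∫ z : Fin D → ℝ, g z * Complex.exp (-2 * Complex.I * ((w ⬝ᵥ z : ℝ) : ℂ)))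
      = hatV g ((π : ℝ)⁻¹ • w) := by
  rw [hatV_apply, Real.fourier_eq',
    integral_pi_eq_euclid (fun z => g z * Complex.exp (-2 * Complex.I * ((w ⬝ᵥ z : ℝ) : ℂ)))]
  congr 1 with v
  rw [smul_eq_mul, mul_comm]
  congr 2
  have h1 : (inner ℝ v (WithLp.toLp 2 ((π : ℝ)⁻¹ • w)) : ℝ)
      = (π:ℝ)⁻¹ * ∑ i, v i * w i := by
    rw [WithLp.toLp_smul, real_inner_smul_right]
    simp [PiLp.inner_apply, RCLike.inner_apply, conj_trivial, mul_comm]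
  rw [h1]
  have h2 : (w ⬝ᵥ (v : Fin D → ℝ) : ℝ) = ∑ i, v i * w i := by
    simp [dotProduct, mul_comm]
  rw [h2]
  have h3 : (-2 * π * ((π:ℝ)⁻¹ * ∑ i, v i * w i) : ℝ) = -2 * ∑ i, v i * w i := by
    field_simp
  rw [h3]
  push_cast
  ring

lemma S_eq (Θ : Matrix (Fin D) (Fin D) ℝ) (y z : Fin D → ℝ) :
    ∑ a, ∑ b, y a * Θ⁻¹ a b * z b = (Θ⁻¹ᵀ *ᵥ y) ⬝ᵥ z := by
  rw [Finset.sum_comm]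
  simp only [dotProduct, mulVec, transpose_apply, Finset.sum_mul]
  exact Finset.sum_congr rfl fun b _ => Finset.sum_congr rfl fun a _ => by ring

lemma skew_dot {Θ : Matrix (Fin D) (Fin D) ℝ} (hskew : Θᵀ = -Θ) (u : Fin D → ℝ) :
    u ⬝ᵥ (Θᵀ *ᵥ u) = 0 := by
  have h1 : u ⬝ᵥ (Θᵀ *ᵥ u) = (Θ *ᵥ u) ⬝ᵥ u := by
    rw [dotProduct_mulVec, vecMul_transpose]
  have h2 : (Θ *ᵥ u) ⬝ᵥ u = u ⬝ᵥ (Θ *ᵥ u) := dotProduct_comm _ _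
  have h3 : Θ *ᵥ u = -(Θᵀ *ᵥ u) := by rw [hskew, neg_mulVec, neg_neg]
  have := h1.trans (h2.trans (by rw [h3, dotProduct_neg]))
  linarith

lemma invT_mul_T {Θ : Matrix (Fin D) (Fin D) ℝ} (hdet : IsUnit Θ.det) : Θ⁻¹ᵀ * Θᵀ = 1 := by
  rw [← Matrix.transpose_mul, Matrix.mul_nonsing_inv Θ hdet, Matrix.transpose_one]

lemma integral_comp_mulVec (M : Matrix (Fin D) (Fin D) ℝ) (hM : M.det ≠ 0)
    (φ : (Fin D → ℝ) → ℂ) (hφ : Continuous φ) :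
    (∫ y, φ y) = |M.det| • ∫ u, φ (M *ᵥ u) := by
  have hmap := Real.map_matrix_volume_pi_eq_smul_volume_pi hM
  have hmeas : AEMeasurable (Matrix.toLin' M) volume :=
    (LinearMap.continuous_on_pi _).measurable.aemeasurable
  have h1 : (∫ u, φ (M *ᵥ u)) = ∫ y, φ y ∂(Measure.map (Matrix.toLin' M) volume) := by
    rw [integral_map hmeas hφ.aestronglyMeasurable]
    simp [Matrix.toLin'_apply]
  rw [h1, hmap, integral_smul_measure, smul_smul, ENNReal.toReal_ofReal (abs_nonneg _)]
  rw [abs_inv, mul_inv_cancel₀ (abs_ne_zero.mpr hM), one_smul]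

lemma moyal_repr (Θ : Matrix (Fin D) (Fin D) ℝ) (hskew : Θᵀ = -Θ) (hdet : IsUnit Θ.det)
    (f g : SchwartzMap (Fin D → ℝ) ℂ) (x : Fin D → ℝ) :
    moyal D Θ f g x = (((π:ℝ) ^ D)⁻¹ : ℝ) • ∫ u : Fin D → ℝ,
      f (x + Θᵀ *ᵥ u) * (Complex.exp (2 * Complex.I * ((u ⬝ᵥ x : ℝ) : ℂ)) *
        hatV g ((π:ℝ)⁻¹ • u)) := by
  unfold moyal
  have hstep1 : ∀ y : Fin D → ℝ,
      (∫ z : Fin D → ℝ, f (x + y) * g (x + z) *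
          Complex.exp (-2 * Complex.I * ((∑ a, ∑ b, y a * Θ⁻¹ a b * z b : ℝ) : ℂ)))
      = f (x + y) * (Complex.exp (2 * Complex.I * (((Θ⁻¹ᵀ *ᵥ y) ⬝ᵥ x : ℝ) : ℂ)) *
          hatV g ((π:ℝ)⁻¹ • (Θ⁻¹ᵀ *ᵥ y))) := by
    intro y
    simp_rw [S_eq Θ y, mul_assoc (f (x + y)), integral_const_mul]
    congr 1
    set w := Θ⁻¹ᵀ *ᵥ y with hw
    calc (∫ z, g (x + z) * Complex.exp (-2 * Complex.I * ((w ⬝ᵥ z : ℝ) : ℂ)))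
        = ∫ z, g (x + z) * Complex.exp (-2 * Complex.I * ((w ⬝ᵥ (x + z) : ℝ) : ℂ)) *
            Complex.exp (2 * Complex.I * ((w ⬝ᵥ x : ℝ) : ℂ)) := by
          congr 1 with z
          conv_rhs => rw [mul_assoc, ← Complex.exp_add]
          congr 2
          rw [dotProduct_add]
          push_cast
          ring
      _ = ∫ z', g z' * Complex.exp (-2 * Complex.I * ((w ⬝ᵥ z' : ℝ) : ℂ)) *
            Complex.exp (2 * Complex.I * ((w ⬝ᵥ x : ℝ) : ℂ)) :=
          integral_add_left_eq_self (fun z' => g z' * Complex.exp (-2 * Complex.I *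
            ((w ⬝ᵥ z' : ℝ) : ℂ)) * Complex.exp (2 * Complex.I * ((w ⬝ᵥ x : ℝ) : ℂ))) x
      _ = (∫ z', g z' * Complex.exp (-2 * Complex.I * ((w ⬝ᵥ z' : ℝ) : ℂ))) *
            Complex.exp (2 * Complex.I * ((w ⬝ᵥ x : ℝ) : ℂ)) := integral_mul_const _ _
      _ = Complex.exp (2 * Complex.I * ((w ⬝ᵥ x : ℝ) : ℂ)) * hatV g ((π:ℝ)⁻¹ • w) := by
          rw [fourier_eq g w, mul_comm]
  simp_rw [hstep1]
  have hcont : Continuous fun y : Fin D → ℝ =>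
      f (x + y) * (Complex.exp (2 * Complex.I * (((Θ⁻¹ᵀ *ᵥ y) ⬝ᵥ x : ℝ) : ℂ)) *
        hatV g ((π:ℝ)⁻¹ • (Θ⁻¹ᵀ *ᵥ y))) := by
    have hA : Continuous fun y : Fin D → ℝ => Θ⁻¹ᵀ *ᵥ y :=
      LinearMap.continuous_on_pi (Matrix.mulVecLin Θ⁻¹ᵀ)
    have hdotx : Continuous fun v : Fin D → ℝ => v ⬝ᵥ x := by
      show Continuous fun v : Fin D → ℝ => ∑ i, v i * x i
      exact continuous_finset_sum _ fun i _ => (continuous_apply i).mul continuous_const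
    exact (f.continuous.comp (continuous_const.add continuous_id)).mul
      (((Complex.continuous_exp.comp ((continuous_const.mul
          (Complex.continuous_ofReal.comp (hdotx.comp hA)))))).mul
        ((hatV g).continuous.comp ((continuous_const_smul ((π:ℝ)⁻¹)).comp hA)))
  rw [integral_comp_mulVec Θᵀ (by rw [Matrix.det_transpose]; exact hdet.ne_zero) _ hcont]
  have hsimp : ∀ u : Fin D → ℝ, Θ⁻¹ᵀ *ᵥ (Θᵀ *ᵥ u) = u := by
    intro u
    rw [Matrix.mulVec_mulVec, invT_mul_T hdet, Matrix.one_mulVec]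
  simp_rw [hsimp]
  rw [Matrix.det_transpose, Complex.real_smul, Complex.real_smul, ← mul_assoc,
    ← Complex.ofReal_mul]
  congr 2
  have hd : |Θ.det| ≠ 0 := abs_ne_zero.mpr (hdet.ne_zero)
  field_simp

lemma phase_norm (c : ℝ) : ‖Complex.exp (2 * Complex.I * (c:ℂ))‖ = 1 := by
  simp [Complex.norm_exp]

lemma translate_integrable (f : SchwartzMap (Fin D → ℝ) ℂ) (a : Fin D → ℝ) :
    Integrable (fun x => f (x + a)) volume :=
  ((measurePreserving_add_right volume a).integrable_comp_emb
    (MeasurableEquiv.addRight a).measurableEmbedding).mpr f.integrable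

lemma key_integrable (Θ : Matrix (Fin D) (Fin D) ℝ) (f g : SchwartzMap (Fin D → ℝ) ℂ) :
    Integrable (Function.uncurry fun u x : Fin D → ℝ =>
      f (x + Θᵀ *ᵥ u) * (Complex.exp (2 * Complex.I * ((u ⬝ᵥ x : ℝ) : ℂ)) *
        hatV g ((π:ℝ)⁻¹ • u))) ((volume : Measure (Fin D → ℝ)).prod volume) := by
  have hGint : Integrable (fun u : Fin D → ℝ => hatV g ((π:ℝ)⁻¹ • u)) volume :=
    (hatV g).integrable.comp_smul (inv_ne_zero pi_ne_zero)
  have hGcont : Continuous (fun u : Fin D → ℝ => hatV g ((π:ℝ)⁻¹ • u)) :=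
    (hatV g).continuous.comp (continuous_const_smul ((π:ℝ)⁻¹))
  have hF : Continuous fun p : (Fin D → ℝ) × (Fin D → ℝ) =>
      f (p.2 + Θᵀ *ᵥ p.1) * (Complex.exp (2 * Complex.I * ((p.1 ⬝ᵥ p.2 : ℝ) : ℂ)) *
        hatV g ((π:ℝ)⁻¹ • p.1)) := by
    have hmv : Continuous fun p : (Fin D → ℝ) × (Fin D → ℝ) => p.2 + Θᵀ *ᵥ p.1 :=
      continuous_snd.add ((LinearMap.continuous_on_pi (Matrix.mulVecLin Θᵀ)).comp continuous_fst)
    have hdot : Continuous fun p : (Fin D → ℝ) × (Fin D → ℝ) => p.1 ⬝ᵥ p.2 := by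
      show Continuous fun p : (Fin D → ℝ) × (Fin D → ℝ) => ∑ i, p.1 i * p.2 i
      exact continuous_finset_sum _ fun i _ =>
        ((continuous_apply i).comp continuous_fst).mul ((continuous_apply i).comp continuous_snd)
    exact (f.continuous.comp hmv).mul
      ((Complex.continuous_exp.comp (continuous_const.mul
        (Complex.continuous_ofReal.comp hdot))).mul (hGcont.comp continuous_fst))
  refine (integrable_prod_iff ?_).mpr ⟨?_, ?_⟩
  · exact hF.aestronglyMeasurable
  · refine ae_of_all _ fun u => ?_
    have base : Integrable (fun x => f (x + Θᵀ *ᵥ u)) volume := translate_integrable f _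
    have hphase : Continuous fun x : Fin D → ℝ =>
        Complex.exp (2 * Complex.I * ((u ⬝ᵥ x : ℝ) : ℂ)) := by
      have hdotu : Continuous fun x : Fin D → ℝ => u ⬝ᵥ x := by
        show Continuous fun x : Fin D → ℝ => ∑ i, u i * x i
        exact continuous_finset_sum _ fun i _ => continuous_const.mul (continuous_apply i)
      exact Complex.continuous_exp.comp (continuous_const.mul
        (Complex.continuous_ofReal.comp hdotu))
    have h1 : Integrable (fun x => Complex.exp (2 * Complex.I * ((u ⬝ᵥ x : ℝ) : ℂ)) *
        f (x + Θᵀ *ᵥ u)) volume :=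
      base.bdd_mul (c := 1) hphase.aestronglyMeasurable (ae_of_all _ fun x => le_of_eq (phase_norm _))
    have h2 := h1.mul_const (hatV g ((π:ℝ)⁻¹ • u))
    exact h2.congr (ae_of_all _ fun x => by simp only [Function.uncurry]; ring)
  · have hfun : (fun u => ∫ x, ‖Function.uncurry (fun u x : Fin D → ℝ =>
        f (x + Θᵀ *ᵥ u) * (Complex.exp (2 * Complex.I * ((u ⬝ᵥ x : ℝ) : ℂ)) *
          hatV g ((π:ℝ)⁻¹ • u))) (u, x)‖)
        = fun u => (∫ x, ‖f x‖) * ‖hatV g ((π:ℝ)⁻¹ • u)‖ := by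
      funext u
      simp only [Function.uncurry]
      calc (∫ x, ‖f (x + Θᵀ *ᵥ u) * (Complex.exp (2 * Complex.I * ((u ⬝ᵥ x : ℝ) : ℂ)) *
              hatV g ((π:ℝ)⁻¹ • u))‖)
          = ∫ x, ‖f (x + Θᵀ *ᵥ u)‖ * ‖hatV g ((π:ℝ)⁻¹ • u)‖ := by
            congr 1 with x
            rw [norm_mul, norm_mul, phase_norm, one_mul]
        _ = (∫ x, ‖f (x + Θᵀ *ᵥ u)‖) * ‖hatV g ((π:ℝ)⁻¹ • u)‖ := integral_mul_const _ _
        _ = (∫ x, ‖f x‖) * ‖hatV g ((π:ℝ)⁻¹ • u)‖ := by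
            rw [integral_add_right_eq_self (fun x => ‖f x‖) (Θᵀ *ᵥ u)]
    rw [hfun]
    exact hGint.norm.const_mul _

lemma rfourier_def (h : EuclideanSpace ℝ (Fin D) → ℂ) :
    VectorFourier.fourierIntegral Real.fourierChar volume (innerₗ (EuclideanSpace ℝ (Fin D))) h
      = 𝓕 h := rfl

lemma parseval_E (f g : SchwartzMap (Fin D → ℝ) ℂ) :
    (∫ ξ : EuclideanSpace ℝ (Fin D), hatV f (-(ξ : Fin D → ℝ)) * hatV g (ξ : Fin D → ℝ))
      = ∫ x : Fin D → ℝ, f x * g x := by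
  have h𝓕fint : Integrable (𝓕 (⇑(toE f))) volume := by
    have := (fourierTransformCLM ℂ (toE f)).integrable (μ := volume)
    rwa [fourierTransformCLM_apply] at this
  have hFinv_int : Integrable (𝓕⁻ (⇑(toE f))) volume := by
    have hneg : MeasurePreserving (fun ξ : EuclideanSpace ℝ (Fin D) => -ξ) volume volume :=
      Measure.measurePreserving_neg _
    have h2 := (hneg.integrable_comp_emb
      (MeasurableEquiv.neg (EuclideanSpace ℝ (Fin D))).measurableEmbedding).mpr h𝓕fint
    exact h2.congr (ae_of_all _ fun ξ =>
      (Real.fourierInv_eq_fourier_neg _ _).symm)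
  have h1 : ∀ ξ : EuclideanSpace ℝ (Fin D),
      hatV f (-(ξ : Fin D → ℝ)) = 𝓕⁻ (⇑(toE f)) ξ := fun ξ => by
    rw [hatV_apply, Real.fourierInv_eq_fourier_neg]; rfl
  have h1g : ∀ ξ : EuclideanSpace ℝ (Fin D),
      hatV g (ξ : Fin D → ℝ) = 𝓕 (⇑(toE g)) ξ := fun ξ => hatV_apply g ξ
  simp_rw [h1, h1g]
  have flipEq : (innerₗ (EuclideanSpace ℝ (Fin D))).flip = innerₗ (EuclideanSpace ℝ (Fin D)) :=
    LinearMap.ext fun x => LinearMap.ext fun y => real_inner_comm x y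
  have key := VectorFourier.integral_fourierIntegral_smul_eq_flip
    (e := Real.fourierChar) (L := innerₗ (EuclideanSpace ℝ (Fin D)))
    (μ := volume) (ν := volume)
    Real.continuous_fourierChar continuous_inner (toE g).integrable hFinv_int
  rw [flipEq] at key
  rw [rfourier_def, rfourier_def] at key
  rw [Continuous.fourier_fourierInv_eq (toE f).continuous (toE f).integrable h𝓕fint] at key
  simp_rw [smul_eq_mul] at key
  calc (∫ ξ : EuclideanSpace ℝ (Fin D), 𝓕⁻ (⇑(toE f)) ξ * 𝓕 (⇑(toE g)) ξ)
      = ∫ ξ : EuclideanSpace ℝ (Fin D), 𝓕 (⇑(toE g)) ξ * 𝓕⁻ (⇑(toE f)) ξ := by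
        congr 1 with ξ; ring
    _ = ∫ x : EuclideanSpace ℝ (Fin D), toE g x * toE f x := key
    _ = ∫ x : Fin D → ℝ, f x * g x := by
        rw [integral_pi_eq_euclid (fun x : Fin D → ℝ => f x * g x)]
        congr 1 with x
        exact mul_comm _ _

lemma moyal_int (Θ : Matrix (Fin D) (Fin D) ℝ) (hskew : Θᵀ = -Θ) (hdet : IsUnit Θ.det)
    (f g : SchwartzMap (Fin D → ℝ) ℂ) :
    (∫ x : Fin D → ℝ, moyal D Θ f g x) = ∫ x : Fin D → ℝ, f x * g x := by
  simp_rw [moyal_repr Θ hskew hdet f g]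
  rw [integral_smul]
  have hsw := integral_integral_swap (f := fun x u : Fin D → ℝ =>
    f (x + Θᵀ *ᵥ u) * (Complex.exp (2 * Complex.I * ((u ⬝ᵥ x : ℝ) : ℂ)) *
      hatV g ((π:ℝ)⁻¹ • u))) ((key_integrable Θ f g).swap)
  rw [hsw]
  have hinner : ∀ u : Fin D → ℝ,
      (∫ x, f (x + Θᵀ *ᵥ u) * (Complex.exp (2 * Complex.I * ((u ⬝ᵥ x : ℝ) : ℂ)) *
        hatV g ((π:ℝ)⁻¹ • u)))
      = hatV f (-((π:ℝ)⁻¹ • u)) * hatV g ((π:ℝ)⁻¹ • u) := by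
    intro u
    have hxint : (∫ x, f (x + Θᵀ *ᵥ u) * Complex.exp (2 * Complex.I * ((u ⬝ᵥ x : ℝ) : ℂ)))
        = hatV f (-((π:ℝ)⁻¹ • u)) := by
      calc (∫ x, f (x + Θᵀ *ᵥ u) * Complex.exp (2 * Complex.I * ((u ⬝ᵥ x : ℝ) : ℂ)))
          = ∫ x, f (x + Θᵀ *ᵥ u) *
              Complex.exp (-2 * Complex.I * (((-u) ⬝ᵥ (x + Θᵀ *ᵥ u) : ℝ) : ℂ)) := by
            congr 1 with x
            congr 1
            have hd : (-u) ⬝ᵥ (x + Θᵀ *ᵥ u) = -(u ⬝ᵥ x) := by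
              rw [neg_dotProduct, dotProduct_add, skew_dot hskew, add_zero]
            rw [hd]
            push_cast
            ring
        _ = ∫ x, f x * Complex.exp (-2 * Complex.I * (((-u) ⬝ᵥ x : ℝ) : ℂ)) :=
            integral_add_right_eq_self (fun x => f x *
              Complex.exp (-2 * Complex.I * (((-u) ⬝ᵥ x : ℝ) : ℂ))) (Θᵀ *ᵥ u)
        _ = hatV f ((π:ℝ)⁻¹ • (-u)) := fourier_eq f (-u)
        _ = hatV f (-((π:ℝ)⁻¹ • u)) := by rw [smul_neg]
    calc (∫ x, f (x + Θᵀ *ᵥ u) * (Complex.exp (2 * Complex.I * ((u ⬝ᵥ x : ℝ) : ℂ)) *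
            hatV g ((π:ℝ)⁻¹ • u)))
        = ∫ x, (f (x + Θᵀ *ᵥ u) * Complex.exp (2 * Complex.I * ((u ⬝ᵥ x : ℝ) : ℂ))) *
            hatV g ((π:ℝ)⁻¹ • u) := by
          congr 1 with x; ring
      _ = (∫ x, f (x + Θᵀ *ᵥ u) * Complex.exp (2 * Complex.I * ((u ⬝ᵥ x : ℝ) : ℂ))) *
            hatV g ((π:ℝ)⁻¹ • u) := integral_mul_const _ _
      _ = hatV f (-((π:ℝ)⁻¹ • u)) * hatV g ((π:ℝ)⁻¹ • u) := by rw [hxint]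
  simp_rw [hinner]
  rw [show (∫ u : Fin D → ℝ, hatV f (-((π:ℝ)⁻¹ • u)) * hatV g ((π:ℝ)⁻¹ • u))
      = ∫ u : Fin D → ℝ, (fun ξ : Fin D → ℝ => hatV f (-ξ) * hatV g ξ) ((π:ℝ)⁻¹ • u) from rfl]
  rw [Measure.integral_comp_smul volume (fun ξ : Fin D → ℝ => hatV f (-ξ) * hatV g ξ) ((π:ℝ)⁻¹)]
  have hrank : Module.finrank ℝ (Fin D → ℝ) = D := Module.finrank_fin_fun ℝ
  rw [hrank]
  have habs : |(((π:ℝ)⁻¹) ^ D)⁻¹| = (π:ℝ) ^ D := by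
    rw [← inv_pow, inv_inv, _root_.abs_of_nonneg (pow_nonneg pi_pos.le _)]
  rw [habs, smul_smul, inv_mul_cancel₀ (pow_ne_zero _ pi_ne_zero), one_smul]
  rw [integral_pi_eq_euclid (fun ξ : Fin D → ℝ => hatV f (-ξ) * hatV g ξ)]
  exact parseval_E f g

end MoyalTraceAux

/-- Trace property of the Moyal product: for Schwartz functions `f, g` on `ℝ^D` and a
nondegenerate skew-symmetric matrix `Θ`,
`∫ (f ⋆ g)(x) dx = ∫ f(x) g(x) dx = ∫ (g ⋆ f)(x) dx`. -/
theorem moyal_trace (D : ℕ) (Θ : Matrix (Fin D) (Fin D) ℝ)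
    (hskew : Θᵀ = -Θ) (hdet : IsUnit Θ.det)
    (f g : SchwartzMap (Fin D → ℝ) ℂ) :
    (∫ x : Fin D → ℝ, moyal D Θ f g x) = (∫ x : Fin D → ℝ, f x * g x) ∧
    (∫ x : Fin D → ℝ, moyal D Θ f g x) = (∫ x : Fin D → ℝ, moyal D Θ g f x) := by
  refine ⟨MoyalTraceAux.moyal_int Θ hskew hdet f g, ?_⟩
  rw [MoyalTraceAux.moyal_int Θ hskew hdet f g, MoyalTraceAux.moyal_int Θ hskew hdet g f]
  congr 1 with x
  exact mul_comm _ _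
end
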